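/- Let p ≥ 1 and let V_p = (v(−s,−t))_{1≤s,t≤p} be the p×p matrix with entries in the commutative subalgebra generated by {v(−s,−t) : s,t > 0} (where v(a,b) = v^{11}(a,b), and all v(−s,−t) with s,t > 0 pairwise commute). Then for integers 1 ≤ m ≤ p and n ≥ 0 with m ≠ n, the commutator [v(−m,n), det V_p] = 0 in U(L_r). -/

import Mathlib

/-- The contraction scalar `[v^j(n), v^l(t)] = δ_{j,l} δ_{n+t,0} n` of the Heisenberg
algebra (with `c = 1`). -/
def kapC {d : ℕ} (j l : Fin d) (n t : ℤ) : ℂ :=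
  if j = l ∧ n + t = 0 then (n : ℂ) else 0

/-- The scalar `σ(i,k,m,s)` such that `v^{ik}(m,s) = (normally ordered part) + σ(i,k,m,s)`:
it equals `m` when `i = k`, `s = −m` and `m > 0`, and `0` otherwise. -/
def sigC {d : ℕ} (i k : Fin d) (m s : ℤ) : ℂ :=
  if i = k ∧ m + s = 0 ∧ 0 < m then (m : ℂ) else 0

/-- A representation of (the universal enveloping algebra of) the Lie algebra `L_r` in an
associative `ℂ`-algebra `A`: a family of elements `ρ i j m n` playing the role of the
quadratic elements `v^{ij}(m,n)`, subject to the symmetry relations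
`v^{ij}(m,n) = v^{ji}(n,m)` (for `i ≠ j` or `m ≠ −n`), `v^{ii}(m,−m) = v^{ii}(−m,m) + m`,
and the commutation relations of `L_r`:
`[v^{ij}(m,n), v^{kl}(s,t)]_r = [b,d] v^{ik}(m,s) + [b,c] v^{il}(m,t) + [a,d] v^{kj}(s,n)
+ [a,c] v^{lj}(t,n) + (r−1)·(scalar part)`, i.e. the plain Wick-formula commutator of
`U(ĥ)/⟨c−1⟩` with its central (`π₂`) component multiplied by `r`. -/
structure LrAlg (d : ℕ) (r : ℂ) (A : Type*) [Ring A] [Algebra ℂ A] where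
  ρ : Fin d → Fin d → ℤ → ℤ → A
  symm : ∀ (i j : Fin d) (m n : ℤ), i ≠ j ∨ m ≠ -n → ρ i j m n = ρ j i n m
  symm' : ∀ (i : Fin d) (m : ℤ), ρ i i m (-m) = ρ i i (-m) m + algebraMap ℂ A (m : ℂ)
  comm : ∀ (i j k l : Fin d) (m n s t : ℤ),
    ρ i j m n * ρ k l s t - ρ k l s t * ρ i j m n
      = kapC j l n t • ρ i k m s + kapC j k n s • ρ i l m t
        + kapC i l m t • ρ k j s n + kapC i k m s • ρ l j t n
        + algebraMap ℂ A ((r - 1) *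
            (kapC j l n t * sigC i k m s + kapC j k n s * sigC i l m t
              + kapC i l m t * sigC k j s n + kapC i k m s * sigC l j t n))

/-- The determinant of the matrix `(w(−f(q), −f(q')))_{q,q'}` with (pairwise commuting)
entries in a possibly noncommutative ring, expanded as
`Σ_σ sgn(σ) Π_q w(−f(q), −f(σ(q)))`. -/
noncomputable def detOn {A : Type*} [Ring A] {k : ℕ} (w : ℤ → ℤ → A) (f : Fin k → ℤ) : A :=
  ∑ σ : Equiv.Perm (Fin k),
    ((Equiv.Perm.sign σ : ℤˣ) : ℤ) • (List.ofFn fun q => w (-(f q)) (-(f (σ q)))).prod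

private lemma aux_deriv_one {R : Type*} [Ring R] (δ : R →+ R)
    (hmul : ∀ x y, δ (x * y) = δ x * y + x * δ y) : δ 1 = 0 := by
  have h := hmul 1 1
  rw [mul_one, mul_one, one_mul] at h
  exact (right_eq_add.mp h)

private lemma aux_deriv_prod {R : Type*} [CommRing R] (δ : R →+ R)
    (hmul : ∀ x y, δ (x * y) = δ x * y + x * δ y)
    {ι : Type*} [DecidableEq ι] (s : Finset ι) (f : ι → R) :
    δ (∏ i ∈ s, f i) = ∑ i ∈ s, (∏ j ∈ s.erase i, f j) * δ (f i) := by
  induction s using Finset.induction_on with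
  | empty => simp [aux_deriv_one δ hmul]
  | @insert a s ha ih =>
    rw [Finset.prod_insert ha, hmul, Finset.sum_insert ha, Finset.erase_insert ha, ih,
      Finset.mul_sum]
    refine congrArg₂ (· + ·) (mul_comm _ _) (Finset.sum_congr rfl fun i hi => ?_)
    have hia : i ≠ a := fun h => ha (h ▸ hi)
    rw [Finset.erase_insert_of_ne hia.symm,
      Finset.prod_insert (fun h => ha (Finset.mem_of_mem_erase h)), mul_assoc]

private lemma aux_deriv_det {R : Type*} [CommRing R] (δ : R →+ R)
    (hmul : ∀ x y, δ (x * y) = δ x * y + x * δ y)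
    {k : ℕ} (M : Matrix (Fin k) (Fin k) R) :
    δ M.det = ∑ q : Fin k, (M.updateCol q fun j => δ (M j q)).det := by
  rw [Matrix.det_apply, map_sum]
  have h1 : ∀ σ : Equiv.Perm (Fin k), δ (Equiv.Perm.sign σ • ∏ i, M (σ i) i)
      = ∑ q, Equiv.Perm.sign σ •
          ((∏ j ∈ Finset.univ.erase q, M (σ j) j) * δ (M (σ q) q)) := by
    intro σ
    rw [Units.smul_def, map_zsmul, aux_deriv_prod δ hmul, Finset.smul_sum]
    simp only [Units.smul_def]
  rw [Finset.sum_congr rfl fun σ _ => h1 σ, Finset.sum_comm]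
  refine Finset.sum_congr rfl fun q _ => ?_
  rw [Matrix.det_apply]
  refine Finset.sum_congr rfl fun σ _ => ?_
  congr 1
  rw [← Finset.prod_erase_mul _ _ (Finset.mem_univ q)]
  refine congrArg₂ (· * ·) (Finset.prod_congr rfl fun j hj => ?_) ?_
  · rw [Matrix.updateCol_apply, if_neg (Finset.mem_erase.mp hj).1]
  · rw [Matrix.updateCol_apply, if_pos rfl]

private lemma aux_det_updateColumn_zsmul {R : Type*} [CommRing R] {k : ℕ}
    (M : Matrix (Fin k) (Fin k) R) (q : Fin k) (z : ℤ) (u : Fin k → R) :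
    (M.updateCol q (fun j => z • u j)).det = z • (M.updateCol q u).det := by
  have h : (fun j => z • u j) = ((z : R) • u) := funext fun j => by
    rw [Pi.smul_apply, Int.cast_smul_eq_zsmul]
  rw [h, Matrix.det_updateCol_smul, ← zsmul_eq_mul]

private lemma aux_det_updateColumn_single {R : Type*} [CommRing R] {k : ℕ}
    (M : Matrix (Fin k) (Fin k) R) (q i : Fin k) (x : R) :
    (M.updateCol q (Pi.single i x)).det = x * (M.updateCol q (Pi.single i 1)).det := by
  have h : Pi.single i x = x • (Pi.single i 1 : Fin k → R) := by
    funext j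
    by_cases hj : j = i <;> simp [Pi.single_apply, hj]
  rw [h, Matrix.det_updateCol_smul]

set_option synthInstance.maxHeartbeats 1000000 in
set_option maxHeartbeats 1000000 in
open Matrix in
theorem stmt_16_aux {d : ℕ} {r : ℂ} {A : Type*} [Ring A] [Algebra ℂ A]
    (S : LrAlg d r A) (i0 : Fin d) (p : ℕ) (m n : ℤ)
    (h1 : 1 ≤ m) (h2 : m ≤ (p : ℤ)) (hn : 0 ≤ n) (hmn : m ≠ n) :
    S.ρ i0 i0 (-m) n * detOn (fun a b => S.ρ i0 i0 a b) (fun q : Fin p => (q : ℤ) + 1)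
      - detOn (fun a b => S.ρ i0 i0 a b) (fun q : Fin p => (q : ℤ) + 1)
          * S.ρ i0 i0 (-m) n = 0 := by
  classical
  set w : ℤ → ℤ → A := fun s t => S.ρ i0 i0 (-s) (-t) with hw
  set X : A := S.ρ i0 i0 (-m) n with hX
  have hkap : ∀ a b : ℤ, kapC i0 i0 a b = if a + b = 0 then (a : ℂ) else 0 := by
    intro a b; simp [kapC]
  have hkap0 : ∀ a b : ℤ, a < 0 → b < 0 → kapC i0 i0 a b = 0 := by
    intro a b ha hb; rw [hkap, if_neg (by omega)]
  have hsig : ∀ a b : ℤ, a < 0 → sigC i0 i0 a b = 0 := by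
    intro a b h; rw [sigC, if_neg]; rintro ⟨-, -, h'⟩; omega
  -- generators commute
  have hcomm : ∀ s t s' t' : ℤ, 0 < s → 0 < t → 0 < s' → 0 < t' →
      w s t * w s' t' = w s' t' * w s t := by
    intro s t s' t' hs ht hs' ht'
    have h := S.comm i0 i0 i0 i0 (-s) (-t) (-s') (-t')
    rw [hkap0 _ _ (by omega) (by omega), hkap0 _ _ (by omega) (by omega),
      hkap0 _ _ (by omega) (by omega), hkap0 _ _ (by omega) (by omega)] at h
    simp only [zero_smul, zero_mul, add_zero, zero_add, mul_zero, map_zero] at h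
    exact sub_eq_zero.mp h
  -- the bracket with X
  have hbr : ∀ s t : ℤ, 0 < s → 0 < t →
      X * w s t - w s t * X
        = (if n = t then n else (0 : ℤ)) • w m s + (if n = s then n else (0 : ℤ)) • w m t := by
    intro s t hs ht
    have h := S.comm i0 i0 i0 i0 (-m) n (-s) (-t)
    rw [hkap0 (-m) (-t) (by omega) (by omega), hkap0 (-m) (-s) (by omega) (by omega),
      hsig (-m) (-s) (by omega), hsig (-m) (-t) (by omega),
      hkap n (-t), hkap n (-s)] at h
    simp only [zero_smul, add_zero, zero_mul, mul_zero, zero_add, map_zero] at h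
    refine h.trans ?_
    refine congrArg₂ (· + ·) ?_ ?_
    · by_cases hnt : n = t
      · rw [if_pos (by omega), if_pos hnt, Int.cast_smul_eq_zsmul]
      · rw [if_neg (by omega), if_neg hnt, zero_smul, zero_smul]
    · by_cases hns : n = s
      · rw [if_pos (by omega), if_pos hns, Int.cast_smul_eq_zsmul]
      · rw [if_neg (by omega), if_neg hns, zero_smul, zero_smul]
  have hwsymm : ∀ s t : ℤ, 0 < s → 0 < t → w s t = w t s := by
    intro s t hs ht
    exact S.symm i0 i0 (-s) (-t) (Or.inr (by omega))
  -- the commutative subring generated by the negative modes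
  set G : Set A := {a | ∃ s t : ℤ, 0 < s ∧ 0 < t ∧ a = w s t} with hG
  have hGcomm : ∀ x ∈ G, ∀ y ∈ G, x * y = y * x := by
    rintro x ⟨s, t, hs, ht, rfl⟩ y ⟨s', t', hs', ht', rfl⟩
    exact hcomm s t s' t' hs ht hs' ht'
  letI : CommRing (Subring.closure G) := Subring.closureCommRingOfComm hGcomm
  have hmem : ∀ s t : ℤ, 0 < s → 0 < t → w s t ∈ Subring.closure G := fun s t hs ht =>
    Subring.subset_closure ⟨s, t, hs, ht, rfl⟩
  have hstab : ∀ y ∈ Subring.closure G, X * y - y * X ∈ Subring.closure G := by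
    intro y hy
    induction hy using Subring.closure_induction with
    | mem x hx =>
      obtain ⟨s, t, hs, ht, rfl⟩ := hx
      rw [hbr s t hs ht]
      exact add_mem (zsmul_mem (hmem m s (by omega) hs) _) (zsmul_mem (hmem m t (by omega) ht) _)
    | zero => simpa using zero_mem (Subring.closure G)
    | one => simpa using zero_mem (Subring.closure G)
    | add x y hx hy ihx ihy =>
      have e : X * (x + y) - (x + y) * X = (X * x - x * X) + (X * y - y * X) := by noncomm_ring
      rw [e]; exact add_mem ihx ihy
    | neg x hx ihx =>
      have e : X * (-x) - (-x) * X = -(X * x - x * X) := by noncomm_ring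
      rw [e]; exact neg_mem ihx
    | mul x y hx hy ihx ihy =>
      have e : X * (x * y) - (x * y) * X = (X * x - x * X) * y + x * (X * y - y * X) := by
        noncomm_ring
      rw [e]; exact add_mem (mul_mem ihx hy) (mul_mem hx ihy)
  -- the derivation
  let δfun : Subring.closure G → Subring.closure G := fun y => ⟨X * y - y * X, hstab y y.2⟩
  have hδadd : ∀ x y, δfun (x + y) = δfun x + δfun y := by
    intro x y
    apply Subtype.ext
    show X * (↑x + ↑y) - (↑x + ↑y) * X = (X * ↑x - ↑x * X) + (X * ↑y - ↑y * X)
    noncomm_ring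
  let δ : Subring.closure G →+ Subring.closure G := AddMonoidHom.mk' δfun hδadd
  have hδmul : ∀ x y, δ (x * y) = δ x * y + x * δ y := by
    intro x y
    apply Subtype.ext
    show X * (↑x * ↑y) - (↑x * ↑y) * X = (X * ↑x - ↑x * X) * ↑y + ↑x * (X * ↑y - ↑y * X)
    noncomm_ring
  have hz : ∀ (z : ℤ) (x : Subring.closure G), ((z • x : ↥(Subring.closure G)) : A) = z • (x : A) := by
    intro z x
    rw [zsmul_eq_mul, zsmul_eq_mul]
    push_cast
    rfl
  -- the matrix
  let MM : Matrix (Fin p) (Fin p) (Subring.closure G) := fun q q' =>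
    ⟨w ((q : ℤ) + 1) ((q' : ℤ) + 1), hmem _ _ (by omega) (by omega)⟩
  have hMMcoe : ∀ a b : Fin p, ((MM a b : ↥(Subring.closure G)) : A) = w ((a : ℤ) + 1) ((b : ℤ) + 1) :=
    fun a b => rfl
  have hMT : MMᵀ = MM := by
    ext q q'
    exact hwsymm ((q' : ℤ) + 1) ((q : ℤ) + 1) (by omega) (by omega)
  have hlist : ∀ g : Fin p → Subring.closure G,
      ((∏ i, g i : ↥(Subring.closure G)) : A) = (List.ofFn fun i => (g i : A)).prod := by
    intro g
    rw [← List.prod_ofFn (f := g)]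
    refine (map_list_prod ((Subring.closure G).subtype) _).trans ?_
    rw [List.map_ofFn]
    rfl
  have hdet' : detOn (fun a b => S.ρ i0 i0 a b) (fun q : Fin p => (q : ℤ) + 1)
      = ((MM.det : ↥(Subring.closure G)) : A) := by
    rw [← hMT, Matrix.det_apply, AddSubmonoidClass.coe_finset_sum]
    unfold detOn
    refine Finset.sum_congr rfl fun σ _ => ?_
    rw [Units.smul_def, hz]
    congr 1
    rw [show (∏ i, MMᵀ (σ i) i) = ∏ i, MM i (σ i) from Finset.prod_congr rfl fun i _ => rfl,
      hlist]
  -- the key vanishing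
  suffices hkey : δ MM.det = 0 by
    rw [hdet']
    have : ((δ MM.det : ↥(Subring.closure G)) : A) = 0 := by rw [hkey]; simp
    exact this
  by_cases hex : ∃ ni : Fin p, ((ni : ℤ) + 1) = n
  · obtain ⟨ni, hni⟩ := hex
    let mi : Fin p := ⟨(m - 1).toNat, by omega⟩
    have hmi : (mi : ℤ) + 1 = m := by
      show ((m - 1).toNat : ℤ) + 1 = m
      omega
    have hnemi : ni ≠ mi := by
      intro h
      exact hmn (by rw [← hmi, ← hni, h])
    have hcond : ∀ q : Fin p, (n = (q : ℤ) + 1) ↔ q = ni := by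
      intro q; rw [Fin.ext_iff]; omega
    have hδM : ∀ j q : Fin p, δ (MM j q)
        = (if q = ni then (n : ℤ) else 0) • MM j mi
          + (if j = ni then (n : ℤ) else 0) • MM mi q := by
      intro j q
      apply Subtype.ext
      have h := hbr ((j : ℤ) + 1) ((q : ℤ) + 1) (by omega) (by omega)
      refine h.trans ?_
      rw [AddMemClass.coe_add, hz, hz, hMMcoe, hMMcoe]
      simp only [hcond, hmi]
      rw [hwsymm m ((j : ℤ) + 1) (by omega) (by omega)]
    have hterm : ∀ q : Fin p, (MM.updateCol q fun j => δ (MM j q)).det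
        = (n : ℤ) • (MM mi q * Matrix.adjugate MM ni q) := by
      intro q
      have hsplit : (fun j => δ (MM j q))
          = (fun j => (if q = ni then (n : ℤ) else 0) • MM j mi)
            + Pi.single ni ((n : ℤ) • MM mi q) := by
        funext j
        rw [Pi.add_apply, hδM j q]
        refine congrArg₂ (· + ·) rfl ?_
        by_cases h : j = ni <;> simp [Pi.single_apply, h]
      rw [hsplit, Matrix.det_updateCol_add]
      have hpart1 : (MM.updateCol q fun j => (if q = ni then (n : ℤ) else 0) • MM j mi).det
          = 0 := by
        rw [aux_det_updateColumn_zsmul]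
        by_cases hq : q = ni
        · rw [hq, Matrix.det_updateCol_eq_zero (Ne.symm hnemi), smul_zero]
        · rw [if_neg hq, zero_smul]
      have hpart2 : (MM.updateCol q (Pi.single ni ((n : ℤ) • MM mi q))).det
          = (n : ℤ) • (MM mi q * Matrix.adjugate MM ni q) := by
        rw [aux_det_updateColumn_single]
        have h2 : (MM.updateCol q (Pi.single ni (1 : ↥(Subring.closure G)))).det = Matrix.adjugate MM ni q := by
          rw [Matrix.adjugate_apply, ← Matrix.det_transpose (MM.updateCol q (Pi.single ni (1 : ↥(Subring.closure G)))),
            ← Matrix.updateRow_transpose, hMT]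
        rw [h2, smul_mul_assoc]
      rw [hpart1, hpart2, zero_add]
    rw [aux_deriv_det δ hδmul MM, Finset.sum_congr rfl fun q _ => hterm q, ← Finset.smul_sum]
    have hadjsymm : ∀ a b : Fin p, Matrix.adjugate MM a b = Matrix.adjugate MM b a := by
      intro a b
      conv_lhs => rw [← hMT, ← Matrix.adjugate_transpose]
      rfl
    have hsum : ∑ q, MM mi q * Matrix.adjugate MM ni q
        = (MM * Matrix.adjugate MM) mi ni := by
      rw [Matrix.mul_apply]
      exact Finset.sum_congr rfl fun q _ => by rw [hadjsymm ni q]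
    rw [hsum, Matrix.mul_adjugate, Matrix.smul_apply, Matrix.one_apply_ne (Ne.symm hnemi)]
    simp
  · push_neg at hex
    have hδM0 : ∀ j q : Fin p, δ (MM j q) = 0 := by
      intro j q
      apply Subtype.ext
      have h := hbr ((j : ℤ) + 1) ((q : ℤ) + 1) (by omega) (by omega)
      refine h.trans ?_
      rw [if_neg (by have := hex q; omega), if_neg (by have := hex j; omega),
        zero_smul, zero_smul, add_zero]
      rfl
    rw [aux_deriv_det δ hδmul MM]
    refine Finset.sum_eq_zero fun q _ => ?_
    rw [show (fun j => δ (MM j q)) = fun _ => (0 : ↥(Subring.closure G)) from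
      funext fun j => hδM0 j q]
    exact Matrix.det_eq_zero_of_column_eq_zero q fun i => by rw [Matrix.updateCol_self]

/-- let `V_p = (v(−s,−t))_{1≤s,t≤p}` with `v(a,b) = v^{11}(a,b)`.  For
integers `1 ≤ m ≤ p` and `n ≥ 0` with `m ≠ n`, the commutator `[v(−m,n), det V_p]`
vanishes in `U(L_r)` (formalized: in every associative `ℂ`-algebra `A` carrying a
representation of `L_r`, which is equivalent to the statement in `U(L_r)` by
universality). -/
theorem stmt_16 (d : ℕ) (hd : 2 ≤ d) (r : ℂ) (A : Type*) [Ring A] [Algebra ℂ A]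
    (S : LrAlg d r A) (p : ℕ) (hp : 1 ≤ p) (m n : ℤ)
    (h1 : 1 ≤ m) (h2 : m ≤ (p : ℤ)) (hn : 0 ≤ n) (hmn : m ≠ n) :
    S.ρ ⟨0, by omega⟩ ⟨0, by omega⟩ (-m) n
        * detOn (fun a b => S.ρ (⟨0, by omega⟩ : Fin d) ⟨0, by omega⟩ a b)
            (fun q : Fin p => (q : ℤ) + 1)
      - detOn (fun a b => S.ρ (⟨0, by omega⟩ : Fin d) ⟨0, by omega⟩ a b)
            (fun q : Fin p => (q : ℤ) + 1)
          * S.ρ ⟨0, by omega⟩ ⟨0, by omega⟩ (-m) n = 0 :=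
  stmt_16_aux S ⟨0, by omega⟩ p m n h1 h2 hn hmn
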